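/- Let I ⊆ ℝ be a nonempty open interval and let (F,f1,f2,G,g1,g2) be a regular solution of equation (1) such that F' is constant on I. Then there exist constants A, B, λ, λ1, λ2 ∈ ℝ such that F(x) = A·x + λ and f_k(x) = -F(x)/2 + B·g_k(x) + λ_k for all x ∈ I and k ∈ {1,2}, and G(u) = B·u + λ1 + λ2 for all u ∈ g1(I)+g2(I). -/

import Mathlib

open Set


lemma const_of_deriv_zero {I : Set ℝ} (hIo : IsOpen I) (hIc : I.OrdConnected)
    {f : ℝ → ℝ} (h : ∀ x ∈ I, HasDerivAt f 0 x) :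
    ∀ x ∈ I, ∀ y ∈ I, f x = f y := by
  intro x hx y hy
  refine hIc.convex.is_const_of_fderivWithin_eq_zero
    (fun z hz => (h z hz).differentiableAt.differentiableWithinAt) (fun z hz => ?_) hx hy
  rw [fderivWithin_of_isOpen hIo hz, (h z hz).hasFDerivAt.fderiv]
  ext; simp


/-- Equation (1): `F((x+y)/2) + f1(x) + f2(y) = G(g1(x) + g2(y))` for all `x, y ∈ I`. -/
def SolvesEq1 (I : Set ℝ) (F f1 f2 G g1 g2 : ℝ → ℝ) : Prop :=
  ∀ x ∈ I, ∀ y ∈ I, F ((x + y) / 2) + f1 x + f2 y = G (g1 x + g2 y)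

/-- If `(F,f1,f2,G,g1,g2)` is a regular solution of equation (1)
(each function continuously differentiable on its domain, `g1', g2'` nonvanishing on `I`)
such that `F'` is constant on `I`, then there are constants `A, B, λ, λ1, λ2` with
`F(x) = A·x + λ`, `f_k(x) = -F(x)/2 + B·g_k(x) + λ_k` on `I`, and `G(u) = B·u + λ1 + λ2`
on `g1(I) + g2(I)`. -/
theorem stmt12
    (I : Set ℝ) (hIo : IsOpen I) (hIc : I.OrdConnected) (hIne : I.Nonempty)
    (F f1 f2 G g1 g2 F' f1' f2' g1' g2' G' : ℝ → ℝ)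
    (hsol : SolvesEq1 I F f1 f2 G g1 g2)
    (hF : ∀ x ∈ I, HasDerivAt F (F' x) x)
    (hf1 : ∀ x ∈ I, HasDerivAt f1 (f1' x) x)
    (hf2 : ∀ x ∈ I, HasDerivAt f2 (f2' x) x)
    (hg1 : ∀ x ∈ I, HasDerivAt g1 (g1' x) x)
    (hg2 : ∀ x ∈ I, HasDerivAt g2 (g2' x) x)
    (hG : ∀ u ∈ {u : ℝ | ∃ x ∈ I, ∃ y ∈ I, u = g1 x + g2 y},
      HasDerivWithinAt G (G' u) {u : ℝ | ∃ x ∈ I, ∃ y ∈ I, u = g1 x + g2 y} u)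
    (hF'c : ContinuousOn F' I) (hf1'c : ContinuousOn f1' I) (hf2'c : ContinuousOn f2' I)
    (hg1'c : ContinuousOn g1' I) (hg2'c : ContinuousOn g2' I)
    (hG'c : ContinuousOn G' {u : ℝ | ∃ x ∈ I, ∃ y ∈ I, u = g1 x + g2 y})
    (hg1'0 : ∀ x ∈ I, g1' x ≠ 0) (hg2'0 : ∀ x ∈ I, g2' x ≠ 0)
    (hF'const : ∀ x ∈ I, ∀ y ∈ I, F' x = F' y) :
    ∃ A B lam lam1 lam2 : ℝ,
      (∀ x ∈ I, F x = A * x + lam ∧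
                f1 x = -F x / 2 + B * g1 x + lam1 ∧
                f2 x = -F x / 2 + B * g2 x + lam2) ∧
      (∀ u : ℝ, (∃ x ∈ I, ∃ y ∈ I, u = g1 x + g2 y) → G u = B * u + lam1 + lam2) := by
  obtain ⟨x0, hx0⟩ := hIne
  have hsol' : ∀ x ∈ I, ∀ y ∈ I, F ((x + y) / 2) + f1 x + f2 y = G (g1 x + g2 y) := hsol
  set S : Set ℝ := {u : ℝ | ∃ x ∈ I, ∃ y ∈ I, u = g1 x + g2 y} with hS
  set A := F' x0 with hA
  have hmid : ∀ x ∈ I, ∀ y ∈ I, (x + y) / 2 ∈ I := by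
    intro x hx y hy
    have := hIc.convex hx hy (by norm_num : (0:ℝ) ≤ 1/2) (by norm_num : (0:ℝ) ≤ 1/2)
      (by norm_num)
    convert this using 1; ring_nf
  -- key derivative identities
  have key1 : ∀ x ∈ I, ∀ y ∈ I, A * (1/2) + f1' x = G' (g1 x + g2 y) * g1' x := by
    intro x hx y hy
    have hm := hmid x hx y hy
    have hu : g1 x + g2 y ∈ S := ⟨x, hx, y, hy, rfl⟩
    have hinner : HasDerivAt (fun x' => (x' + y) / 2) (1 / 2) x := by
      simpa using ((hasDerivAt_id x).add_const y).div_const 2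
    have hL : HasDerivWithinAt (fun x' => F ((x' + y) / 2) + f1 x' + f2 y)
        (F' ((x + y) / 2) * (1/2) + f1' x) I x :=
      ((((hF _ hm).comp x hinner).add (hf1 x hx)).add_const (f2 y)).hasDerivWithinAt
    have hg1w : HasDerivWithinAt (fun x' => g1 x' + g2 y) (g1' x) I x :=
      ((hg1 x hx).add_const (g2 y)).hasDerivWithinAt
    have hmap : MapsTo (fun x' => g1 x' + g2 y) I S := fun z hz => ⟨z, hz, y, hy, rfl⟩
    have hR : HasDerivWithinAt (fun x' => G (g1 x' + g2 y)) (G' (g1 x + g2 y) * g1' x) I x :=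
      (hG _ hu).comp x hg1w hmap
    have hL' : HasDerivWithinAt (fun x' => G (g1 x' + g2 y))
        (F' ((x + y) / 2) * (1/2) + f1' x) I x :=
      by
        have e1 : ∀ z ∈ I, G (g1 z + g2 y) = F ((z + y) / 2) + f1 z + f2 y :=
          fun z hz => (hsol' z hz y hy).symm
        exact hL.congr_of_mem e1 hx
    have hud := hIo.uniqueDiffWithinAt (𝕜 := ℝ) hx
    have := (hL'.derivWithin hud).symm.trans (hR.derivWithin hud)
    rw [hF'const _ hm x0 hx0] at this
    exact this
  have key2 : ∀ x ∈ I, ∀ y ∈ I, A * (1/2) + f2' y = G' (g1 x + g2 y) * g2' y := by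
    intro x hx y hy
    have hm := hmid x hx y hy
    have hu : g1 x + g2 y ∈ S := ⟨x, hx, y, hy, rfl⟩
    have hinner : HasDerivAt (fun y' => (x + y') / 2) (1 / 2) y := by
      simpa using ((hasDerivAt_id y).const_add x).div_const 2
    have hL : HasDerivWithinAt (fun y' => F ((x + y') / 2) + f1 x + f2 y')
        (F' ((x + y) / 2) * (1/2) + f2' y) I y :=
      ((((hF _ hm).comp y hinner).add_const (f1 x)).add (hf2 y hy)).hasDerivWithinAt
    have hg2w : HasDerivWithinAt (fun y' => g1 x + g2 y') (g2' y) I y :=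
      ((hg2 y hy).const_add (g1 x)).hasDerivWithinAt
    have hmap : MapsTo (fun y' => g1 x + g2 y') I S := fun z hz => ⟨x, hx, z, hz, rfl⟩
    have hR : HasDerivWithinAt (fun y' => G (g1 x + g2 y')) (G' (g1 x + g2 y) * g2' y) I y :=
      (hG _ hu).comp y hg2w hmap
    have hL' : HasDerivWithinAt (fun y' => G (g1 x + g2 y'))
        (F' ((x + y) / 2) * (1/2) + f2' y) I y :=
      by
        have e1 : ∀ z ∈ I, G (g1 x + g2 z) = F ((x + z) / 2) + f1 x + f2 z :=
          fun z hz => (hsol' x hx z hz).symm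
        exact hL.congr_of_mem e1 hy
    have hud := hIo.uniqueDiffWithinAt (𝕜 := ℝ) hy
    have := (hL'.derivWithin hud).symm.trans (hR.derivWithin hud)
    rw [hF'const _ hm x0 hx0] at this
    exact this
  set B := (A * (1/2) + f1' x0) / g1' x0 with hB
  -- G' is B on points g1 x0 + g2 y
  have hG'B0 : ∀ y ∈ I, G' (g1 x0 + g2 y) = B := by
    intro y hy
    have := key1 x0 hx0 y hy
    rw [hB, eq_div_iff (hg1'0 x0 hx0)]
    linarith [this]
  have hf2'B : ∀ y ∈ I, f2' y = B * g2' y - A * (1/2) := by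
    intro y hy
    have h2 := key2 x0 hx0 y hy
    rw [hG'B0 y hy] at h2; linarith
  have hf1'B : ∀ x ∈ I, f1' x = B * g1' x - A * (1/2) := by
    intro x hx
    have h2 := key2 x hx x0 hx0
    have h2' := hf2'B x0 hx0
    rw [h2'] at h2
    have hGval : G' (g1 x + g2 x0) = B := by
      have hne := hg2'0 x0 hx0
      have hm : B * g2' x0 = G' (g1 x + g2 x0) * g2' x0 := by linarith
      exact (mul_right_cancel₀ hne hm).symm
    have h1 := key1 x hx x0 hx0
    rw [hGval] at h1; linarith
  have hF'A : ∀ x ∈ I, F' x = A := fun x hx => hF'const x hx x0 hx0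
  -- F is affine
  have hFc : ∀ x ∈ I, ∀ y ∈ I, F x - A * x = F y - A * y := by
    apply const_of_deriv_zero hIo hIc
    intro x hx
    have : HasDerivAt (fun x => F x - A * x) (F' x - A * 1) x :=
      (hF x hx).sub ((hasDerivAt_id x).const_mul A)
    simpa [hF'A x hx] using this
  set lam := F x0 - A * x0 with hlam
  have hFx : ∀ x ∈ I, F x = A * x + lam := by
    intro x hx; have := hFc x hx x0 hx0; rw [← hlam] at this; linarith
  -- f1, f2 affine in g's
  have hf1c : ∀ x ∈ I, ∀ y ∈ I,
      (f1 x - B * g1 x + A * (1/2) * x) = (f1 y - B * g1 y + A * (1/2) * y) := by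
    apply const_of_deriv_zero hIo hIc
    intro x hx
    have : HasDerivAt (fun x => f1 x - B * g1 x + A * (1/2) * x)
        (f1' x - B * g1' x + A * (1/2) * 1) x :=
      ((hf1 x hx).sub ((hg1 x hx).const_mul B)).add ((hasDerivAt_id x).const_mul (A * (1/2)))
    simpa [hf1'B x hx] using this
  have hf2c : ∀ x ∈ I, ∀ y ∈ I,
      (f2 x - B * g2 x + A * (1/2) * x) = (f2 y - B * g2 y + A * (1/2) * y) := by
    apply const_of_deriv_zero hIo hIc
    intro x hx
    have : HasDerivAt (fun x => f2 x - B * g2 x + A * (1/2) * x)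
        (f2' x - B * g2' x + A * (1/2) * 1) x :=
      ((hf2 x hx).sub ((hg2 x hx).const_mul B)).add ((hasDerivAt_id x).const_mul (A * (1/2)))
    simpa [hf2'B x hx] using this
  set c1 := f1 x0 - B * g1 x0 + A * (1/2) * x0 with hc1
  set c2 := f2 x0 - B * g2 x0 + A * (1/2) * x0 with hc2
  refine ⟨A, B, lam, c1 + lam / 2, c2 + lam / 2, ?_, ?_⟩
  · intro x hx
    have h1 := hf1c x hx x0 hx0
    have h2 := hf2c x hx x0 hx0
    have hFv := hFx x hx
    rw [← hc1] at h1; rw [← hc2] at h2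
    refine ⟨hFv, by rw [hFv]; linarith, by rw [hFv]; linarith⟩
  · rintro u ⟨x, hx, y, hy, rfl⟩
    have heq := hsol' x hx y hy
    have hFm := hFx _ (hmid x hx y hy)
    have hFvx := hFx x hx
    have hFvy := hFx y hy
    have h1 := hf1c x hx x0 hx0
    have h2 := hf2c y hy x0 hx0
    rw [← hc1] at h1; rw [← hc2] at h2
    rw [hFm] at heq
    nlinarith [heq, h1, h2, hFvx, hFvy]
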